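/- For all n ≥ 4, A_4(n,5,[2,1,1]) ≤ n·⌊(n−1)/2⌋. -/

import Mathlib

open Finset

/-- `u` has composition `w̄`: for each nonzero symbol `j`, exactly `w j` coordinates equal `j`. -/
def HasComposition {q : ℕ} {X : Type*} [Fintype X] [DecidableEq X]
    (w : ZMod q → ℕ) (u : X → ZMod q) : Prop :=
  ∀ j : ZMod q, j ≠ 0 → (Finset.univ.filter fun x => u x = j).card = w j

/-- A constant-composition code with composition `w̄` and minimum distance `d`. -/
def IsCCCode (q d : ℕ) (w : ZMod q → ℕ) {X : Type*} [Fintype X] [DecidableEq X]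
    (C : Finset (X → ZMod q)) : Prop :=
  (∀ u ∈ C, HasComposition w u) ∧
  ∀ u ∈ C, ∀ v ∈ C, u ≠ v → d ≤ hammingDist u v

/-- `A_q(n,d,w̄)`: the maximum size of an `(n,d,w̄)_q` constant-composition code. -/
noncomputable def maxCCC (q n d : ℕ) (w : ZMod q → ℕ) : ℕ :=
  sSup {s | ∃ C : Finset (Fin n → ZMod q), IsCCCode q d w C ∧ C.card = s}

/-- The composition `[2,1,1]` for quaternary codes: two 1's, one 2, one 3. -/
def w211 : ZMod 4 → ℕ :=
  fun j => if j = 1 then 2 else if j = 2 then 1 else if j = 3 then 1 else 0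

lemma ones_card {n : ℕ} {u : Fin n → ZMod 4} (h : HasComposition w211 u) :
    (Finset.univ.filter fun i => u i = 1).card = 2 := by
  have := h 1 (by decide); rwa [show w211 1 = 2 by decide] at this

lemma twos_card {n : ℕ} {u : Fin n → ZMod 4} (h : HasComposition w211 u) :
    (Finset.univ.filter fun i => u i = 2).card = 1 := by
  have := h 2 (by decide); rwa [show w211 2 = 1 by decide] at this

lemma threes_card {n : ℕ} {u : Fin n → ZMod 4} (h : HasComposition w211 u) :
    (Finset.univ.filter fun i => u i = 3).card = 1 := by
  have := h 3 (by decide); rwa [show w211 3 = 1 by decide] at this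

/-- Two distinct codewords sharing the same `2`-position have disjoint `1`-sets. -/
lemma ones_disjoint {n : ℕ} {C : Finset (Fin n → ZMod 4)} (hC : IsCCCode 4 5 w211 C)
    {x : Fin n} {u v : Fin n → ZMod 4} (hu : u ∈ C) (hv : v ∈ C)
    (hux : u x = 2) (hvx : v x = 2) (huv : u ≠ v) :
    Disjoint (Finset.univ.filter fun i => u i = 1)
      (Finset.univ.filter fun i => v i = 1) := by
  rw [Finset.disjoint_left]
  rintro z hz1 hz2
  simp only [Finset.mem_filter, Finset.mem_univ, true_and] at hz1 hz2
  have hcompu := hC.1 u hu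
  have hcompv := hC.1 v hv
  have hdist : 5 ≤ hammingDist u v := hC.2 u hu v hv huv
  -- the set where u and v differ is contained in a set of size ≤ 4
  have hsub : (Finset.univ.filter fun i => u i ≠ v i) ⊆
      (((Finset.univ.filter fun i => u i = 1).erase z) ∪
        (Finset.univ.filter fun i => u i = 3)) ∪
      (((Finset.univ.filter fun i => v i = 1).erase z) ∪
        (Finset.univ.filter fun i => v i = 3)) := by
    intro i hi
    simp only [Finset.mem_filter, Finset.mem_univ, true_and] at hi
    have hix : i ≠ x := by
      rintro rfl; exact hi (hux.trans hvx.symm)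
    have h2u : u i ≠ 2 := by
      intro h2
      have hmem : i ∈ Finset.univ.filter fun j => u j = 2 := by simp [h2]
      have hxm : x ∈ Finset.univ.filter fun j => u j = 2 := by simp [hux]
      exact hix (Finset.card_le_one.mp (le_of_eq (twos_card hcompu)) _ hmem _ hxm)
    have h2v : v i ≠ 2 := by
      intro h2
      have hmem : i ∈ Finset.univ.filter fun j => v j = 2 := by simp [h2]
      have hxm : x ∈ Finset.univ.filter fun j => v j = 2 := by simp [hvx]
      exact hix (Finset.card_le_one.mp (le_of_eq (twos_card hcompv)) _ hmem _ hxm)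
    have hiz : i ≠ z ∨ (u i ≠ 1 ∧ v i ≠ 1) := by
      by_cases h : i = z
      · subst h; exact Or.inr ⟨fun h1 => hi (h1.trans hz2.symm) , fun h1 => hi (hz1.trans h1.symm)⟩
      · exact Or.inl h
    simp only [Finset.mem_union, Finset.mem_erase, Finset.mem_filter, Finset.mem_univ, true_and]
    have key : u i = 1 ∨ u i = 3 ∨ v i = 1 ∨ v i = 3 := by
      have hall : ∀ a : ZMod 4, a = 0 ∨ a = 1 ∨ a = 2 ∨ a = 3 := by decide
      have hu0 := hall (u i)
      have hv0 := hall (v i)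
      rcases hu0 with h | h | h | h
      · rcases hv0 with h' | h' | h' | h'
        · exact absurd (h.trans h'.symm) hi
        · exact Or.inr (Or.inr (Or.inl h'))
        · exact absurd h' h2v
        · exact Or.inr (Or.inr (Or.inr h'))
      · exact Or.inl h
      · exact absurd h h2u
      · exact Or.inr (Or.inl h)
    rcases key with h | h | h | h
    · refine Or.inl (Or.inl ⟨?_, h⟩)
      rcases hiz with h' | h'
      · exact h'
      · exact absurd h h'.1
    · exact Or.inl (Or.inr h)
    · refine Or.inr (Or.inl ⟨?_, h⟩)
      rcases hiz with h' | h'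
      · exact h'
      · exact absurd h h'.2
    · exact Or.inr (Or.inr h)
  have hzu : z ∈ Finset.univ.filter fun i => u i = 1 := by simp [hz1]
  have hzv : z ∈ Finset.univ.filter fun i => v i = 1 := by simp [hz2]
  have hcard : hammingDist u v ≤ 4 := by
    calc hammingDist u v = (Finset.univ.filter fun i => u i ≠ v i).card := rfl
      _ ≤ _ := Finset.card_le_card hsub
      _ ≤ (((Finset.univ.filter fun i => u i = 1).erase z) ∪
            (Finset.univ.filter fun i => u i = 3)).card +
          (((Finset.univ.filter fun i => v i = 1).erase z) ∪
            (Finset.univ.filter fun i => v i = 3)).card := Finset.card_union_le _ _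
      _ ≤ (((Finset.univ.filter fun i => u i = 1).erase z).card +
            (Finset.univ.filter fun i => u i = 3).card) +
          ((((Finset.univ.filter fun i => v i = 1).erase z)).card +
            (Finset.univ.filter fun i => v i = 3).card) :=
        Nat.add_le_add (Finset.card_union_le _ _) (Finset.card_union_le _ _)
      _ = 4 := by
        rw [Finset.card_erase_of_mem hzu, Finset.card_erase_of_mem hzv,
          ones_card hcompu, ones_card hcompv, threes_card hcompu, threes_card hcompv]
  omega

lemma fiber_bound {n : ℕ} {C : Finset (Fin n → ZMod 4)} (hC : IsCCCode 4 5 w211 C)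
    (x : Fin n) : (C.filter fun u => u x = 2).card ≤ (n - 1) / 2 := by
  set T := C.filter fun u => u x = 2 with hT
  have hdisj : (T : Set (Fin n → ZMod 4)).PairwiseDisjoint
      (fun u => Finset.univ.filter fun i => u i = 1) := by
    intro u hu v hv huv
    simp only [hT, Finset.coe_filter, Set.mem_setOf_eq] at hu hv
    exact ones_disjoint hC hu.1 hv.1 hu.2 hv.2 huv
  have hcardU : (T.biUnion fun u => Finset.univ.filter fun i => u i = 1).card =
      ∑ u ∈ T, (Finset.univ.filter fun i => u i = 1).card :=
    Finset.card_biUnion (fun u hu v hv huv => hdisj hu hv huv)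
  have hsum : ∑ u ∈ T, (Finset.univ.filter fun i => u i = 1).card = 2 * T.card := by
    rw [Finset.sum_congr rfl fun u hu => ones_card (hC.1 u (Finset.mem_filter.mp hu).1)]
    simp [mul_comm, hT]
  have hsubset : (T.biUnion fun u => Finset.univ.filter fun i => u i = 1) ⊆
      Finset.univ.erase x := by
    intro i hi
    rcases Finset.mem_biUnion.mp hi with ⟨u, hu, hiu⟩
    simp only [Finset.mem_filter, Finset.mem_univ, true_and] at hiu
    have hux : u x = 2 := (Finset.mem_filter.mp hu).2
    refine Finset.mem_erase.mpr ⟨?_, Finset.mem_univ _⟩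
    rintro rfl
    rw [hux] at hiu
    exact absurd hiu (by decide)
  have hle : 2 * T.card ≤ n - 1 := by
    have h := Finset.card_le_card hsubset
    rw [hcardU, hsum, Finset.card_erase_of_mem (Finset.mem_univ x),
      Finset.card_univ, Fintype.card_fin] at h
    exact h
  exact (Nat.le_div_iff_mul_le two_pos).mpr (by rw [mul_comm]; exact hle)

/-- `A_4(n,5,[2,1,1]) ≤ n·⌊(n−1)/2⌋` for all `n ≥ 4`. -/
theorem maxCCC_dist_five_upper_bound (n : ℕ) (hn : 4 ≤ n) :
    maxCCC 4 n 5 w211 ≤ n * ((n - 1) / 2) := by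
  apply csSup_le'
  rintro s ⟨C, hC, rfl⟩
  have hcount : C.card = ∑ x : Fin n, (C.filter fun u => u x = 2).card := by
    have : ∀ x : Fin n, (C.filter fun u => u x = 2).card =
        ∑ u ∈ C, if u x = 2 then 1 else 0 := fun x => Finset.card_filter _ _
    simp_rw [this]
    rw [Finset.sum_comm]
    have : ∀ u ∈ C, (∑ x : Fin n, if u x = 2 then 1 else 0) = 1 := by
      intro u hu
      have h2 := twos_card (hC.1 u hu)
      calc (∑ x : Fin n, if u x = 2 then 1 else 0)
          = (Finset.univ.filter fun x => u x = 2).card := (Finset.card_filter _ _).symm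
        _ = 1 := h2
    rw [Finset.sum_congr rfl this, Finset.sum_const, Nat.smul_one_eq_cast, Nat.cast_id]
  calc C.card = ∑ x : Fin n, (C.filter fun u => u x = 2).card := hcount
    _ ≤ ∑ _x : Fin n, (n - 1) / 2 := Finset.sum_le_sum fun x _ => fiber_bound hC x
    _ = n * ((n - 1) / 2) := by simp [Finset.sum_const, Finset.card_univ, mul_comm]
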